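/- Let (V, W, ∧, [·,·], ι, 𝓛, B) be a calculus over R. Setting L := V[1], M̃ := W[1][[z]], d := zB, 𝓛_x := 𝓛_x, and I_x := (−1)^{|x|}ι_x for x ∈ V, the triple (d, 𝓛, I) with ρ = 0 satisfies the three CH relations: [d, I_y] + I_{δy} + z𝓛_y = 0 (with δ = 0), I_{[y₁,y₂]} = (−1)^{|y₁|}[𝓛_{y₁}, I_{y₂}], and [𝓛_{y₁}, 𝓛_{y₂}] = 𝓛_{[y₁,y₂]}; hence M̃ is a CH module over L with ℓ_k^{M̃} = 0 for k ≥ 2. -/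
import Mathlib


/-!
A calculus (V, W, ∧, [·,·], ι, 𝓛, B) gives a CH module: with
L := V[1], M̃ := W[1][[z]], d := zB, I_x := (−1)^{|x|}ι_x and ρ = 0,
the CH relations hold.
-/

noncomputable section

def sgn (n : ℤ) : ℤ := ((Int.negOnePow n : ℤˣ) : ℤ)

lemma sgn_add (a b : ℤ) : sgn (a + b) = sgn a * sgn b := by
  simp [sgn, Int.negOnePow_add]

lemma sgn_sq (a : ℤ) : sgn a * sgn a = 1 := by
  simp [sgn, ← Units.val_mul, ← Int.negOnePow_add]

lemma sgn_neg (a : ℤ) : sgn (-a) = sgn a := by simp [sgn]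

lemma sgn_sub_one (a : ℤ) : sgn (a - 1) = -sgn a := by
  have h : a - 1 = a + (-1) := by ring
  rw [h, sgn_add]; simp [sgn]

lemma sgn_two_mul (a : ℤ) : sgn (2 * a) = 1 := by simp [sgn]

variable {R : Type*} [CommRing R]

/-- Graded commutator of operators of the indicated degrees. -/
def gcomm {M : Type*} [AddCommGroup M] [Module R M]
    (P : M →ₗ[R] M) (dp : ℤ) (Q : M →ₗ[R] M) (dq : ℤ) : M →ₗ[R] M :=
  P ∘ₗ Q - sgn (dp * dq) • (Q ∘ₗ P)

variable {W : Type*} [AddCommGroup W] [Module R W]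

/-- Multiplication by the degree-2 formal variable `z` on `W[[z]] = ℕ → W`. -/
def zOp : (ℕ → W) →ₗ[R] (ℕ → W) where
  toFun f n := if n = 0 then 0 else f (n - 1)
  map_add' f g := by funext n; by_cases h : n = 0 <;> simp [h]
  map_smul' c f := by funext n; by_cases h : n = 0 <;> simp [h]

lemma zOp_apply (f : ℕ → W) (n : ℕ) :
    (zOp (R := R) f) n = if n = 0 then 0 else f (n - 1) := rfl

/-- let `(V, W, ∧, [·,·], ι, 𝓛, B)` be a calculus over `R`.  Setting
`L := V[1]`, `M̃ := W[1][[z]]`, `d := zB`, `I_x := (−1)^{|x|}ι_x` and `ρ := 0`,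
the three CH relations hold:
`[d, I_y] + I_{δy} + z𝓛_y = 0` (with `δ = 0`),
`I_{[y₁,y₂]} = (−1)^{|y₁|}[𝓛_{y₁}, I_{y₂}]`, and
`[𝓛_{y₁}, 𝓛_{y₂}] = 𝓛_{[y₁,y₂]}`;
hence `M̃` is a CH module over `L` with `ℓ_k^{M̃} = 0` for `k ≥ 2`. -/
theorem calculus_gives_CH_module
    {V : Type*} [AddCommGroup V] [Module R V] (𝒱 : ℤ → Submodule R V)
    (wedge : V →ₗ[R] V →ₗ[R] V)            -- the product ∧ on V
    (br : V →ₗ[R] V →ₗ[R] V)               -- the graded Lie bracket on V[1]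
    (ι : V →ₗ[R] (W →ₗ[R] W))              -- the V-module structure on W
    (lie : V →ₗ[R] (W →ₗ[R] W))            -- the graded Lie module structure 𝓛 on W[1]
    (B : W →ₗ[R] W)                        -- B ∈ End^{-1}(W)
    (hB : B ∘ₗ B = 0)
    -- degree conditions
    (hwdeg : ∀ (d₁ d₂ : ℤ) (x₁ x₂ : V), x₁ ∈ 𝒱 d₁ → x₂ ∈ 𝒱 d₂ →
      wedge x₁ x₂ ∈ 𝒱 (d₁ + d₂))
    (hbrdeg : ∀ (d₁ d₂ : ℤ) (x₁ x₂ : V), x₁ ∈ 𝒱 d₁ → x₂ ∈ 𝒱 d₂ →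
      br x₁ x₂ ∈ 𝒱 (d₁ + d₂ - 1))
    -- graded commutative algebra structure on (V, ∧)
    (hwcomm : ∀ (d₁ d₂ : ℤ) (x₁ x₂ : V), x₁ ∈ 𝒱 d₁ → x₂ ∈ 𝒱 d₂ →
      wedge x₁ x₂ = sgn (d₁ * d₂) • wedge x₂ x₁)
    -- graded Lie algebra structure on V[1] (shifted degrees |x|' = |x| − 1)
    (hbrsymm : ∀ (d₁ d₂ : ℤ) (x₁ x₂ : V), x₁ ∈ 𝒱 d₁ → x₂ ∈ 𝒱 d₂ →
      br x₁ x₂ = -(sgn ((d₁ - 1) * (d₂ - 1)) • br x₂ x₁))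
    (hbrjac : ∀ (d₁ d₂ d₃ : ℤ) (x₁ x₂ x₃ : V), x₁ ∈ 𝒱 d₁ → x₂ ∈ 𝒱 d₂ → x₃ ∈ 𝒱 d₃ →
      br x₁ (br x₂ x₃) = br (br x₁ x₂) x₃ + sgn ((d₁ - 1) * (d₂ - 1)) • br x₂ (br x₁ x₃))
    -- graded Lie module structure 𝓛 : V[1] ⊗ W[1] → W[1]
    (hliemod : ∀ (d₁ d₂ : ℤ) (x₁ x₂ : V), x₁ ∈ 𝒱 d₁ → x₂ ∈ 𝒱 d₂ →
      gcomm (lie x₁) (d₁ - 1) (lie x₂) (d₂ - 1) = lie (br x₁ x₂))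
    -- calculus axiom: l_{x₁}(x₂ ∧ x₃) = (l_{x₁}x₂) ∧ x₃ + (−1)^{(|x₁|+1)|x₂|} x₂ ∧ l_{x₁}x₃
    (hleib : ∀ (d₁ d₂ d₃ : ℤ) (x₁ x₂ x₃ : V), x₁ ∈ 𝒱 d₁ → x₂ ∈ 𝒱 d₂ → x₃ ∈ 𝒱 d₃ →
      sgn (d₁ - 1) • br x₁ (wedge x₂ x₃) =
        wedge (sgn (d₁ - 1) • br x₁ x₂) x₃ +
          sgn ((d₁ + 1) * d₂) • wedge x₂ (sgn (d₁ - 1) • br x₁ x₃))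
    -- calculus axiom: l_{x₁∧x₂} = l_{x₁} ∘ ι_{x₂} + (−1)^{|x₁|} ι_{x₁} ∘ l_{x₂}
    (hlwedge : ∀ (d₁ d₂ : ℤ) (x₁ x₂ : V), x₁ ∈ 𝒱 d₁ → x₂ ∈ 𝒱 d₂ →
      sgn (d₁ + d₂ - 1) • lie (wedge x₁ x₂) =
        (sgn (d₁ - 1) • lie x₁) ∘ₗ ι x₂ + sgn d₁ • (ι x₁ ∘ₗ (sgn (d₂ - 1) • lie x₂)))
    -- calculus axiom: ι_{l_{x₁}x₂} = [l_{x₁}, ι_{x₂}]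
    (hiota : ∀ (d₁ d₂ : ℤ) (x₁ x₂ : V), x₁ ∈ 𝒱 d₁ → x₂ ∈ 𝒱 d₂ →
      ι (sgn (d₁ - 1) • br x₁ x₂) =
        gcomm (sgn (d₁ - 1) • lie x₁) (d₁ + 1) (ι x₂) d₂)
    -- calculus axiom: l_x = [B, ι_x]
    (hcartan : ∀ (d₁ : ℤ) (x : V), x ∈ 𝒱 d₁ →
      sgn (d₁ - 1) • lie x = gcomm B (-1) (ι x) d₁) :
    -- CH relation (3.4), with δ = 0, d := zB, I_x := (−1)^{|x|} ι_x :
    (∀ (d₁ : ℤ) (x : V), x ∈ 𝒱 d₁ →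
      gcomm (R := R) (zOp ∘ₗ B.compLeft ℕ) 1 (sgn d₁ • (ι x).compLeft ℕ) d₁
        + zOp ∘ₗ (lie x).compLeft ℕ = 0) ∧
    -- CH relation (3.5), with ρ = 0 :
    (∀ (d₁ d₂ : ℤ) (x₁ x₂ : V), x₁ ∈ 𝒱 d₁ → x₂ ∈ 𝒱 d₂ →
      sgn (d₁ + d₂ - 1) • (ι (br x₁ x₂)).compLeft ℕ =
        sgn (d₁ - 1) •
          gcomm (R := R) ((lie x₁).compLeft ℕ) (d₁ - 1)
            (sgn d₂ • (ι x₂).compLeft ℕ) d₂) ∧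
    -- CH relation (3.6) reduces (ρ = 0) to the Lie module relation on W[[z]] :
    (∀ (d₁ d₂ : ℤ) (x₁ x₂ : V), x₁ ∈ 𝒱 d₁ → x₂ ∈ 𝒱 d₂ →
      gcomm (R := R) ((lie x₁).compLeft ℕ) (d₁ - 1) ((lie x₂).compLeft ℕ) (d₂ - 1) =
        (lie (br x₁ x₂)).compLeft ℕ) := by
  refine ⟨?_, ?_, ?_⟩
  · intro d₁ x hx
    have hsq := sgn_sq d₁
    apply LinearMap.ext; intro g; funext n
    by_cases hn : n = 0
    · simp [gcomm, zOp_apply, hn]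
    · have h := LinearMap.congr_fun (hcartan d₁ x hx) (g (n - 1))
      simp only [gcomm, LinearMap.sub_apply, LinearMap.add_apply, LinearMap.smul_apply,
        LinearMap.comp_apply, LinearMap.compLeft_apply, Function.comp_apply,
        Pi.sub_apply, Pi.add_apply, Pi.smul_apply, Pi.zero_apply, LinearMap.zero_apply,
        zOp_apply, if_neg hn, sgn_sub_one, neg_one_mul, sgn_neg, one_mul,
        map_zsmul, map_smul] at h ⊢
      linear_combination (norm := module) (-(sgn d₁) : ℤ) • h - hsq • (lie x (g (n - 1)))
  · intro d₁ d₂ x₁ x₂ h₁ h₂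
    have hι := hiota d₁ d₂ x₁ x₂ h₁ h₂
    apply LinearMap.ext; intro g; funext n
    have h := LinearMap.congr_fun hι (g n)
    simp only [gcomm, LinearMap.sub_apply, LinearMap.smul_apply, LinearMap.comp_apply,
      LinearMap.compLeft_apply, Function.comp_apply, Pi.sub_apply, Pi.smul_apply,
      map_zsmul, map_smul] at h ⊢
    rw [show (d₁ + 1) * d₂ = (d₁ - 1) * d₂ + 2 * d₂ by ring, sgn_add, sgn_two_mul,
      mul_one] at h
    rw [show d₁ + d₂ - 1 = (d₁ - 1) + d₂ by ring, sgn_add]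
    linear_combination (norm := module) (sgn d₂ : ℤ) • h
  · intro d₁ d₂ x₁ x₂ h₁ h₂
    rw [← hliemod d₁ d₂ x₁ x₂ h₁ h₂]
    apply LinearMap.ext; intro g; funext n
    simp [gcomm, LinearMap.compLeft_apply, LinearMap.sub_apply, LinearMap.smul_apply,
      Pi.sub_apply, Pi.smul_apply, Function.comp_apply]


end
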